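/- On the ellipse Γ = {ξ = ξ_a} in elliptic coordinates, the Neumann–Poincaré operator satisfies K*_Γ[β_n^{c}] = (1/(2e^{2nξ_a})) β_n^{c} and K*_Γ[β_n^{s}] = −(1/(2e^{2nξ_a})) β_n^{s}, where β_n^{c}(η) = γ(ξ_a,η)^{−1} cos(nη) and β_n^{s}(η) = γ(ξ_a,η)^{−1} sin(nη) with γ(ξ_a,η) = l√(sinh²ξ_a + sin²η). -/

import Mathlib

/-- Metric factor `γ(ξ_a, η) = l √(sinh²ξ_a + sin²η)` on the ellipse `{ξ = ξ_a}`. -/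
noncomputable def ellipseGamma (l ξa η : ℝ) : ℝ :=
  l * Real.sqrt (Real.sinh ξa ^ 2 + Real.sin η ^ 2)

/-- The point of the ellipse `{ξ = ξ_a}` with elliptic angle `η`. -/
noncomputable def ellipsePt (l ξa η : ℝ) : ℝ × ℝ :=
  (l * Real.cosh ξa * Real.cos η, l * Real.sinh ξa * Real.sin η)

/-- Outward unit normal to the ellipse `{ξ = ξ_a}` at the point with angle `α`. -/
noncomputable def ellipseNu (l ξa α : ℝ) : ℝ × ℝ :=
  (l * Real.sinh ξa * Real.cos α / ellipseGamma l ξa α,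
   l * Real.cosh ξa * Real.sin α / ellipseGamma l ξa α)

/-- Neumann–Poincaré kernel `∂G(x,y)/∂ν(x) = ⟨x−y, ν(x)⟩/(2π|x−y|²)` on the
ellipse, with `x = x(α)`, `y = x(η)`. -/
noncomputable def ellipseNPKernel (l ξa α η : ℝ) : ℝ :=
  (((ellipsePt l ξa α).1 - (ellipsePt l ξa η).1) * (ellipseNu l ξa α).1 +
    ((ellipsePt l ξa α).2 - (ellipsePt l ξa η).2) * (ellipseNu l ξa α).2) /
  (2 * Real.pi * (((ellipsePt l ξa α).1 - (ellipsePt l ξa η).1) ^ 2 +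
    ((ellipsePt l ξa α).2 - (ellipsePt l ξa η).2) ^ 2))


open Real intervalIntegral MeasureTheory

lemma np_denom_pos {r : ℝ} (hr : 0 < r) (hr1 : r < 1) (θ : ℝ) :
    0 < 1 - 2*r*Real.cos θ + r^2 := by
  nlinarith [Real.cos_le_one θ, sq_nonneg (1 - r)]

lemma np_denom_cont {r : ℝ} : Continuous (fun θ : ℝ => 1 - 2*r*Real.cos θ + r^2) := by
  continuity

lemma np_cont {r : ℝ} (hr : 0 < r) (hr1 : r < 1) {f : ℝ → ℝ} (hf : Continuous f) :
    Continuous (fun θ => f θ / (1 - 2*r*Real.cos θ + r^2)) :=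
  hf.div np_denom_cont (fun θ => (np_denom_pos hr hr1 θ).ne')

lemma np_hasDerivAt {r : ℝ} (hr : 0 < r) (hr1 : r < 1) (θ : ℝ) :
    HasDerivAt (fun θ => θ + 2 * Real.arctan (r * Real.sin θ / (1 - r * Real.cos θ)))
      ((1 - r^2) / (1 - 2*r*Real.cos θ + r^2)) θ := by
  have hd : (0:ℝ) < 1 - r * Real.cos θ := by nlinarith [Real.cos_le_one θ]
  have hu : HasDerivAt (fun θ => r * Real.sin θ / (1 - r * Real.cos θ))
      ((r * Real.cos θ * (1 - r * Real.cos θ) - r * Real.sin θ * (r * Real.sin θ)) /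
        (1 - r * Real.cos θ)^2) θ := by
    exact ((Real.hasDerivAt_sin θ).const_mul r).div
      (((Real.hasDerivAt_cos θ).const_mul r).const_sub 1 |>.congr_deriv (by ring))
      hd.ne'
  have ha : HasDerivAt (fun θ => θ + 2 * Real.arctan (r * Real.sin θ / (1 - r * Real.cos θ)))
      (1 + 2 * ((1 / (1 + (r * Real.sin θ / (1 - r * Real.cos θ))^2)) *
        ((r * Real.cos θ * (1 - r * Real.cos θ) - r * Real.sin θ * (r * Real.sin θ)) /
          (1 - r * Real.cos θ)^2))) θ := by
    exact (hasDerivAt_id θ).add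
      (((Real.hasDerivAt_arctan _).comp θ hu).const_mul 2) |>.congr_deriv (by ring)
  convert ha using 1
  have hD := (np_denom_pos hr hr1 θ).ne'
  have hpyth : Real.sin θ ^ 2 + Real.cos θ ^ 2 = 1 := Real.sin_sq_add_cos_sq θ
  have h2 : 1 + (r * Real.sin θ / (1 - r * Real.cos θ))^2
      = (1 - 2*r*Real.cos θ + r^2) / (1 - r * Real.cos θ)^2 := by
    field_simp
    linear_combination (r^2) * hpyth
  have hs : Real.sin θ ^ 2 = 1 - Real.cos θ ^ 2 := by linarith
  rw [h2]
  have hD' : 1 - r * 2 * Real.cos θ + r ^ 2 ≠ 0 := fun h => hD (by linarith)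
  field_simp
  ring_nf
  simp only [hs]
  ring

lemma np_I0 {r : ℝ} (hr : 0 < r) (hr1 : r < 1) :
    ∫ θ in (0:ℝ)..(2*Real.pi), (1 - 2*r*Real.cos θ + r^2)⁻¹ = 2*Real.pi/(1-r^2) := by
  have hr2 : (0:ℝ) < 1 - r^2 := by nlinarith
  have key : ∫ θ in (0:ℝ)..(2*Real.pi), (1-r^2) * (1 - 2*r*Real.cos θ + r^2)⁻¹ = 2*Real.pi := by
    have := intervalIntegral.integral_eq_sub_of_hasDerivAt
      (f := fun θ => θ + 2 * Real.arctan (r * Real.sin θ / (1 - r * Real.cos θ)))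
      (fun θ _ => np_hasDerivAt hr hr1 θ)
      (((np_cont hr hr1 continuous_const (f := fun _ => 1-r^2))).intervalIntegrable 0 (2*Real.pi))
    simp only [Real.sin_two_pi, Real.cos_two_pi, Real.sin_zero, Real.cos_zero, mul_zero,
      zero_div, Real.arctan_zero, mul_zero, add_zero, sub_zero] at this
    calc ∫ θ in (0:ℝ)..(2*Real.pi), (1-r^2) * (1 - 2*r*Real.cos θ + r^2)⁻¹
        = ∫ θ in (0:ℝ)..(2*Real.pi), (1-r^2) / (1 - 2*r*Real.cos θ + r^2) := by
          simp [div_eq_mul_inv]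
      _ = 2*Real.pi := by rw [this]
  rw [intervalIntegral.integral_const_mul] at key
  field_simp at key ⊢
  linarith

lemma np_int_cos_nat (m : ℕ) (hm : 1 ≤ m) :
    ∫ θ in (0:ℝ)..(2*Real.pi), Real.cos (m*θ) = 0 := by
  have hm0 : (m:ℝ) ≠ 0 := by positivity
  rw [intervalIntegral.integral_comp_mul_left (fun x => Real.cos x) hm0]
  rw [integral_cos]
  have h1 : Real.sin ((m:ℝ) * (2*Real.pi)) = 0 := by
    have := Real.sin_nat_mul_pi (2*m)
    push_cast at this
    convert this using 2
    ring
  simp [h1]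

lemma np_In {r : ℝ} (hr : 0 < r) (hr1 : r < 1) (n : ℕ) :
    ∫ θ in (0:ℝ)..(2*Real.pi), Real.cos (n*θ) / (1 - 2*r*Real.cos θ + r^2)
      = 2*Real.pi*r^n/(1-r^2) := by
  have hr2 : (0:ℝ) < 1 - r^2 := by nlinarith
  have hDne : ∀ θ : ℝ, (1 - 2*r*Real.cos θ + r^2) ≠ 0 := fun θ => (np_denom_pos hr hr1 θ).ne'
  -- base case 0
  have base0 : ∫ θ in (0:ℝ)..(2*Real.pi), Real.cos ((0:ℝ)*θ) / (1 - 2*r*Real.cos θ + r^2)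
      = 2*Real.pi*r^(0:ℕ)/(1-r^2) := by
    simp only [zero_mul, Real.cos_zero, pow_zero, mul_one, one_div]
    rw [np_I0 hr hr1]
  -- base case 1
  have base1 : ∫ θ in (0:ℝ)..(2*Real.pi), Real.cos ((1:ℝ)*θ) / (1 - 2*r*Real.cos θ + r^2)
      = 2*Real.pi*r^(1:ℕ)/(1-r^2) := by
    have hpt : ∀ θ ∈ Set.uIcc (0:ℝ) (2*Real.pi),
        Real.cos ((1:ℝ)*θ) / (1 - 2*r*Real.cos θ + r^2)
          = (1+r^2)/(2*r) * (1 / (1 - 2*r*Real.cos θ + r^2)) - 1/(2*r) := by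
      intro θ _
      have := hDne θ
      rw [one_mul]
      have hD' : 1 - Real.cos θ * 2 * r + r ^ 2 ≠ 0 := fun h => this (by linarith)
      field_simp
      ring
    rw [intervalIntegral.integral_congr hpt, intervalIntegral.integral_sub
      ((continuous_const.fun_mul (np_cont hr hr1 continuous_const)).intervalIntegrable 0 (2*Real.pi))
      (intervalIntegrable_const),
      intervalIntegral.integral_const_mul, intervalIntegral.integral_const]
    have h0 : ∫ θ in (0:ℝ)..(2*Real.pi), 1 / (1 - 2*r*Real.cos θ + r^2) = 2*Real.pi/(1-r^2) := by
      simp only [one_div]; exact np_I0 hr hr1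
    rw [h0, smul_eq_mul]
    have hrne : r ≠ 0 := hr.ne'
    field_simp
    ring
  -- inductive step
  have step : ∀ k : ℕ,
      (∫ θ in (0:ℝ)..(2*Real.pi), Real.cos ((k:ℝ)*θ) / (1 - 2*r*Real.cos θ + r^2)
        = 2*Real.pi*r^k/(1-r^2)) →
      (∫ θ in (0:ℝ)..(2*Real.pi), Real.cos (((k:ℝ)+1)*θ) / (1 - 2*r*Real.cos θ + r^2)
        = 2*Real.pi*r^(k+1)/(1-r^2)) →
      (∫ θ in (0:ℝ)..(2*Real.pi), Real.cos (((k:ℝ)+1+1)*θ) / (1 - 2*r*Real.cos θ + r^2)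
        = 2*Real.pi*r^(k+1+1)/(1-r^2)) := by
    intro k ih1 ih2
    have hpt : ∀ θ ∈ Set.uIcc (0:ℝ) (2*Real.pi),
        Real.cos (((k:ℝ)+1+1)*θ) / (1 - 2*r*Real.cos θ + r^2)
          = (1+r^2)/r * (Real.cos (((k:ℝ)+1)*θ) / (1 - 2*r*Real.cos θ + r^2))
            - (1/r) * Real.cos (((k:ℝ)+1)*θ)
            - Real.cos ((k:ℝ)*θ) / (1 - 2*r*Real.cos θ + r^2) := by
      intro θ _
      have hD := hDne θ
      have hrne : r ≠ 0 := hr.ne'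
      have htrig : Real.cos (((k:ℝ)+1+1)*θ)
          = 2 * Real.cos θ * Real.cos (((k:ℝ)+1)*θ) - Real.cos ((k:ℝ)*θ) := by
        have h1 := Real.cos_add (((k:ℝ)+1)*θ) θ
        have h2 := Real.cos_sub (((k:ℝ)+1)*θ) θ
        have e1 : ((k:ℝ)+1)*θ + θ = ((k:ℝ)+1+1)*θ := by ring
        have e2 : ((k:ℝ)+1)*θ - θ = (k:ℝ)*θ := by ring
        rw [e1] at h1; rw [e2] at h2
        linarith
      rw [htrig]
      have hD' : 1 - 2 * Real.cos θ * r + r ^ 2 ≠ 0 := fun h => hD (by linarith)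
      field_simp
      ring
    rw [intervalIntegral.integral_congr hpt]
    have hc1 : Continuous fun θ : ℝ => Real.cos (((k:ℝ)+1)*θ) :=
      Real.continuous_cos.comp (continuous_const.mul continuous_id)
    have hck : Continuous fun θ : ℝ => Real.cos ((k:ℝ)*θ) :=
      Real.continuous_cos.comp (continuous_const.mul continuous_id)
    rw [intervalIntegral.integral_sub, intervalIntegral.integral_sub,
      intervalIntegral.integral_const_mul, intervalIntegral.integral_const_mul]
    · have e2 : ∫ θ in (0:ℝ)..(2*Real.pi), Real.cos (((k:ℝ)+1)*θ) = 0 := by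
        have := np_int_cos_nat (k+1) (Nat.le_add_left 1 k)
        push_cast at this
        exact this
      rw [ih1, ih2, e2]
      have hrne : r ≠ 0 := hr.ne'
      field_simp
      ring
    · exact (continuous_const.mul (np_cont hr hr1 hc1)).intervalIntegrable 0 (2*Real.pi)
    · exact (continuous_const.mul hc1).intervalIntegrable 0 (2*Real.pi)
    · exact ((continuous_const.mul (np_cont hr hr1 hc1)).sub
        (continuous_const.mul hc1)).intervalIntegrable 0 (2*Real.pi)
    · exact (np_cont hr hr1 hck).intervalIntegrable 0 (2*Real.pi)
  -- two-step induction
  have main : ∀ m : ℕ,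
      (∫ θ in (0:ℝ)..(2*Real.pi), Real.cos ((m:ℝ)*θ) / (1 - 2*r*Real.cos θ + r^2)
        = 2*Real.pi*r^m/(1-r^2)) ∧
      (∫ θ in (0:ℝ)..(2*Real.pi), Real.cos (((m:ℝ)+1)*θ) / (1 - 2*r*Real.cos θ + r^2)
        = 2*Real.pi*r^(m+1)/(1-r^2)) := by
    intro m
    induction m with
    | zero =>
      constructor
      · have := base0; norm_num at this ⊢; exact this
      · have := base1; norm_num at this ⊢; exact this
    | succ k ih =>
      constructor
      · have := ih.2; push_cast at this ⊢; exact this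
      · have := step k ih.1 ih.2; push_cast at this ⊢; exact this
  exact (main n).1

lemma np_Sn {r : ℝ} (hr : 0 < r) (hr1 : r < 1) (n : ℕ) :
    ∫ θ in (0:ℝ)..(2*Real.pi), Real.sin (n*θ) / (1 - 2*r*Real.cos θ + r^2) = 0 := by
  have key := intervalIntegral.integral_comp_sub_left (a := (0:ℝ)) (b := 2*Real.pi)
    (fun θ => Real.sin (n*θ) / (1 - 2*r*Real.cos θ + r^2)) (2*Real.pi)
  have hsym : ∀ x : ℝ, Real.sin ((n:ℝ)*(2*Real.pi - x)) / (1 - 2*r*Real.cos (2*Real.pi - x) + r^2)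
      = - (Real.sin ((n:ℝ)*x) / (1 - 2*r*Real.cos x + r^2)) := by
    intro x
    have hc : Real.cos (2*Real.pi - x) = Real.cos x := Real.cos_two_pi_sub x
    have hs : Real.sin ((n:ℝ)*(2*Real.pi - x)) = - Real.sin ((n:ℝ)*x) := by
      have : (n:ℝ)*(2*Real.pi - x) = (n:ℝ)*(2*Real.pi) - (n:ℝ)*x := by ring
      rw [this, Real.sin_sub]
      have h1 : Real.sin ((n:ℝ) * (2*Real.pi)) = 0 := by
        have := Real.sin_nat_mul_pi (2*n); push_cast at this
        convert this using 2; ring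
      have h2 : Real.cos ((n:ℝ) * (2*Real.pi)) = 1 := by
        have := Real.cos_nat_mul_two_pi n; push_cast at this; exact this
      rw [h1, h2]; ring
    rw [hc, hs, neg_div]
  simp only [hsym] at key
  rw [intervalIntegral.integral_neg] at key
  have : (2*Real.pi - 2*Real.pi) = (0:ℝ) := by ring
  rw [this, sub_zero] at key
  linarith

lemma np_shift_cos {r : ℝ} (hr : 0 < r) (hr1 : r < 1) (n : ℕ) (α : ℝ) :
    ∫ η in (0:ℝ)..(2*Real.pi), Real.cos (n*η) / (1 - 2*r*Real.cos (α+η) + r^2)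
      = (2*Real.pi*r^n/(1-r^2)) * Real.cos (n*α) := by
  have hDne : ∀ θ : ℝ, (1 - 2*r*Real.cos θ + r^2) ≠ 0 := fun θ => (np_denom_pos hr hr1 θ).ne'
  set g : ℝ → ℝ := fun θ => Real.cos ((n:ℝ)*(θ - α)) / (1 - 2*r*Real.cos θ + r^2) with hg
  have h1 : (∫ η in (0:ℝ)..(2*Real.pi), Real.cos (n*η) / (1 - 2*r*Real.cos (α+η) + r^2))
      = ∫ η in (0:ℝ)..(2*Real.pi), g (η + α) := by
    apply intervalIntegral.integral_congr
    intro η _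
    simp only [hg]
    rw [show η + α - α = η by ring, show α + η = η + α by ring]
  rw [h1, intervalIntegral.integral_comp_add_right g α]
  have hper : Function.Periodic g (2*Real.pi) := by
    intro θ
    simp only [hg]
    have hc : Real.cos (θ + 2*Real.pi) = Real.cos θ := Real.cos_add_two_pi θ
    have hs : Real.cos ((n:ℝ)*(θ + 2*Real.pi - α)) = Real.cos ((n:ℝ)*(θ - α)) := by
      have : (n:ℝ)*(θ + 2*Real.pi - α) = (n:ℝ)*(θ - α) + (n:ℝ)*(2*Real.pi) := by ring
      rw [this]
      rw [Real.cos_add_nat_mul_two_pi]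
    rw [hc, hs]
  have hshift : (∫ θ in (0:ℝ)+α..(2*Real.pi)+α, g θ) = ∫ θ in (0:ℝ)..(2*Real.pi), g θ := by
    have := hper.intervalIntegral_add_eq ((0:ℝ)+α) 0
    simpa [add_comm, add_assoc, add_left_comm] using this
  rw [hshift]
  have hexp : ∀ θ ∈ Set.uIcc (0:ℝ) (2*Real.pi), g θ
      = Real.cos ((n:ℝ)*α) * (Real.cos ((n:ℝ)*θ) / (1 - 2*r*Real.cos θ + r^2))
        + Real.sin ((n:ℝ)*α) * (Real.sin ((n:ℝ)*θ) / (1 - 2*r*Real.cos θ + r^2)) := by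
    intro θ _
    simp only [hg]
    rw [show (n:ℝ)*(θ - α) = (n:ℝ)*θ - (n:ℝ)*α by ring, Real.cos_sub]
    field_simp
  rw [intervalIntegral.integral_congr hexp]
  have hcc : Continuous fun θ : ℝ => Real.cos ((n:ℝ)*θ) :=
    Real.continuous_cos.comp (continuous_const.mul continuous_id)
  have hsc : Continuous fun θ : ℝ => Real.sin ((n:ℝ)*θ) :=
    Real.continuous_sin.comp (continuous_const.mul continuous_id)
  rw [intervalIntegral.integral_add
    ((continuous_const.fun_mul (np_cont hr hr1 hcc)).intervalIntegrable 0 (2*Real.pi))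
    ((continuous_const.fun_mul (np_cont hr hr1 hsc)).intervalIntegrable 0 (2*Real.pi)),
    intervalIntegral.integral_const_mul, intervalIntegral.integral_const_mul,
    np_In hr hr1 n, np_Sn hr hr1 n]
  ring

lemma np_shift_sin {r : ℝ} (hr : 0 < r) (hr1 : r < 1) (n : ℕ) (α : ℝ) :
    ∫ η in (0:ℝ)..(2*Real.pi), Real.sin (n*η) / (1 - 2*r*Real.cos (α+η) + r^2)
      = -((2*Real.pi*r^n/(1-r^2)) * Real.sin (n*α)) := by
  have hDne : ∀ θ : ℝ, (1 - 2*r*Real.cos θ + r^2) ≠ 0 := fun θ => (np_denom_pos hr hr1 θ).ne'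
  set g : ℝ → ℝ := fun θ => Real.sin ((n:ℝ)*(θ - α)) / (1 - 2*r*Real.cos θ + r^2) with hg
  have h1 : (∫ η in (0:ℝ)..(2*Real.pi), Real.sin (n*η) / (1 - 2*r*Real.cos (α+η) + r^2))
      = ∫ η in (0:ℝ)..(2*Real.pi), g (η + α) := by
    apply intervalIntegral.integral_congr
    intro η _
    simp only [hg]
    rw [show η + α - α = η by ring, show α + η = η + α by ring]
  rw [h1, intervalIntegral.integral_comp_add_right g α]
  have hper : Function.Periodic g (2*Real.pi) := by
    intro θ
    simp only [hg]
    have hc : Real.cos (θ + 2*Real.pi) = Real.cos θ := Real.cos_add_two_pi θ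
    have hs : Real.sin ((n:ℝ)*(θ + 2*Real.pi - α)) = Real.sin ((n:ℝ)*(θ - α)) := by
      have : (n:ℝ)*(θ + 2*Real.pi - α) = (n:ℝ)*(θ - α) + (n:ℝ)*(2*Real.pi) := by ring
      rw [this]
      rw [Real.sin_add_nat_mul_two_pi]
    rw [hc, hs]
  have hshift : (∫ θ in (0:ℝ)+α..(2*Real.pi)+α, g θ) = ∫ θ in (0:ℝ)..(2*Real.pi), g θ := by
    have := hper.intervalIntegral_add_eq ((0:ℝ)+α) 0
    simpa [add_comm, add_assoc, add_left_comm] using this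
  rw [hshift]
  have hexp : ∀ θ ∈ Set.uIcc (0:ℝ) (2*Real.pi), g θ
      = Real.cos ((n:ℝ)*α) * (Real.sin ((n:ℝ)*θ) / (1 - 2*r*Real.cos θ + r^2))
        - Real.sin ((n:ℝ)*α) * (Real.cos ((n:ℝ)*θ) / (1 - 2*r*Real.cos θ + r^2)) := by
    intro θ _
    simp only [hg]
    rw [show (n:ℝ)*(θ - α) = (n:ℝ)*θ - (n:ℝ)*α by ring, Real.sin_sub]
    field_simp
  rw [intervalIntegral.integral_congr hexp]
  have hcc : Continuous fun θ : ℝ => Real.cos ((n:ℝ)*θ) :=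
    Real.continuous_cos.comp (continuous_const.mul continuous_id)
  have hsc : Continuous fun θ : ℝ => Real.sin ((n:ℝ)*θ) :=
    Real.continuous_sin.comp (continuous_const.mul continuous_id)
  rw [intervalIntegral.integral_sub
    ((continuous_const.fun_mul (np_cont hr hr1 hsc)).intervalIntegrable 0 (2*Real.pi))
    ((continuous_const.fun_mul (np_cont hr hr1 hcc)).intervalIntegrable 0 (2*Real.pi)),
    intervalIntegral.integral_const_mul, intervalIntegral.integral_const_mul,
    np_In hr hr1 n, np_Sn hr hr1 n]
  ring

lemma np_gamma_pos (l ξa : ℝ) (hl : 0 < l) (hξa : 0 < ξa) (η : ℝ) :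
    0 < ellipseGamma l ξa η := by
  have hs : 0 < Real.sinh ξa := Real.sinh_pos_iff.2 hξa
  have h : 0 < Real.sinh ξa ^ 2 + Real.sin η ^ 2 := by positivity
  exact mul_pos hl (Real.sqrt_pos.2 h)

lemma np_kernel_eq (l ξa : ℝ) (hl : 0 < l) (hξa : 0 < ξa) (α η : ℝ)
    (h : Real.cos (α - η) ≠ 1) :
    ellipseNPKernel l ξa α η
      = Real.sinh (2*ξa) /
        (4 * Real.pi * ellipseGamma l ξa α * (Real.cosh (2*ξa) - Real.cos (α+η))) := by
  have hs : 0 < Real.sinh ξa := Real.sinh_pos_iff.2 hξa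
  have hγ : 0 < ellipseGamma l ξa α := np_gamma_pos l ξa hl hξa α
  set s := Real.sinh ξa with hsdef
  set c := Real.cosh ξa with hcdef
  set γ := ellipseGamma l ξa α with hγdef
  set ca := Real.cos α with hca
  set sa := Real.sin α with hsa
  set cη := Real.cos η with hcη
  set sη := Real.sin η with hsη
  have hpa : sa^2 + ca^2 = 1 := Real.sin_sq_add_cos_sq α
  have hpη : sη^2 + cη^2 = 1 := Real.sin_sq_add_cos_sq η
  have hc2 : c^2 = s^2 + 1 := by rw [hcdef, hsdef]; rw [Real.cosh_sq]
  have hcd : Real.cos (α - η) = ca*cη + sa*sη := Real.cos_sub α η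
  have hP1 : ca*cη + sa*sη < 1 := by
    have h1 : Real.cos (α - η) ≤ 1 := Real.cos_le_one _
    rw [hcd] at h1 h
    exact lt_of_le_of_ne h1 h
  have hcsum : Real.cos (α + η) = ca*cη - sa*sη := Real.cos_add α η
  have hC : Real.cosh (2*ξa) = c^2 + s^2 := by
    rw [Real.cosh_two_mul]
  have hS2 : Real.sinh (2*ξa) = 2*s*c := by
    rw [Real.sinh_two_mul]
  have hcη1 : ca*cη - sa*sη ≤ 1 := by rw [← hcsum]; exact Real.cos_le_one _
  have hR : 0 < c^2 + s^2 - (ca*cη - sa*sη) := by nlinarith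
  have hB : (l*c*ca - l*c*cη)^2 + (l*s*sa - l*s*sη)^2
      = l^2*(1-(ca*cη+sa*sη))*(c^2+s^2-(ca*cη-sa*sη)) := by
    linear_combination (l^2*(sa*sη - ca*cη + ca^2 + cη^2 - 1)) * hc2
      + (l^2*(s^2 + sη^2)) * hpa + (l^2*(s^2 + 1 - ca^2)) * hpη
  have hnum : (l*c*ca - l*c*cη) * (l*s*ca/γ) + (l*s*sa - l*s*sη) * (l*c*sa/γ)
      = l^2*s*c*(1-(ca*cη+sa*sη))/γ := by
    rw [eq_div_iff hγ.ne']
    field_simp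
    linear_combination c * hpa
  show ((l*c*ca - l*c*cη) * (l*s*ca/γ) + (l*s*sa - l*s*sη) * (l*c*sa/γ)) /
      (2 * Real.pi * ((l*c*ca - l*c*cη)^2 + (l*s*sa - l*s*sη)^2))
    = Real.sinh (2*ξa) / (4 * Real.pi * γ * (Real.cosh (2*ξa) - Real.cos (α+η)))
  rw [hnum, hB, hS2, hC, hcsum]
  have hπ : (0:ℝ) < Real.pi := Real.pi_pos
  have h1P : 0 < 1 - (ca*cη + sa*sη) := by linarith
  have h2 : (0:ℝ) < 1 - (ca*cη + sa*sη) := h1P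
  field_simp
  ring


/-- Spectral action of the Neumann–Poincaré operator on the ellipse `{ξ = ξ_a}`:
`K*_Γ[β_n^c] = (1/(2e^{2nξ_a})) β_n^c` and `K*_Γ[β_n^s] = −(1/(2e^{2nξ_a})) β_n^s`,
where `β_n^c(η) = γ(ξ_a,η)⁻¹ cos(nη)`, `β_n^s(η) = γ(ξ_a,η)⁻¹ sin(nη)` and the
arc length element is `ds = γ dη`. -/
theorem neumannPoincare_ellipse_eigen (l ξa : ℝ) (hl : 0 < l) (hξa : 0 < ξa)
    (n : ℕ) (hn : 1 ≤ n) (α : ℝ) :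
    (∫ η in (0:ℝ)..(2 * Real.pi),
        ellipseNPKernel l ξa α η * ((ellipseGamma l ξa η)⁻¹ * Real.cos (n * η)) *
          ellipseGamma l ξa η)
      = (1 / (2 * Real.exp (2 * n * ξa))) * ((ellipseGamma l ξa α)⁻¹ * Real.cos (n * α)) ∧
    (∫ η in (0:ℝ)..(2 * Real.pi),
        ellipseNPKernel l ξa α η * ((ellipseGamma l ξa η)⁻¹ * Real.sin (n * η)) *
          ellipseGamma l ξa η)
      = -(1 / (2 * Real.exp (2 * n * ξa))) * ((ellipseGamma l ξa α)⁻¹ * Real.sin (n * α)) := by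
  have hπ : (0:ℝ) < Real.pi := Real.pi_pos
  set r : ℝ := Real.exp (-(2*ξa)) with hrdef
  have hr : 0 < r := Real.exp_pos _
  have hr1 : r < 1 := by
    rw [hrdef, Real.exp_lt_one_iff]
    linarith
  have hr2 : (0:ℝ) < 1 - r^2 := by nlinarith
  have hEmul : r * Real.exp (2*ξa) = 1 := by
    rw [hrdef, ← Real.exp_add, show -(2*ξa) + 2*ξa = 0 by ring, Real.exp_zero]
  have hrn : r^n * Real.exp (2*n*ξa) = 1 := by
    rw [hrdef, ← Real.exp_nat_mul, ← Real.exp_add,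
      show (n:ℝ) * -(2*ξa) + 2*n*ξa = 0 by ring, Real.exp_zero]
  have hrinv : r⁻¹ = Real.exp (2*ξa) := inv_eq_of_mul_eq_one_right hEmul
  have hγα : 0 < ellipseGamma l ξa α := np_gamma_pos l ξa hl hξa α
  -- cosh/sinh in terms of r
  have hcosh : Real.cosh (2*ξa) = (r⁻¹ + r)/2 := by
    rw [Real.cosh_eq, hrinv, ← hrdef]
  have hsinh : Real.sinh (2*ξa) = (1 - r^2)/(2*r) := by
    rw [Real.sinh_eq, ← hrdef, ← hrinv]
    clear_value r
    field_simp
  have hcoshD : ∀ θ : ℝ, Real.cosh (2*ξa) - Real.cos θ = (1 - 2*r*Real.cos θ + r^2)/(2*r) := by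
    intro θ
    rw [hcosh]
    clear_value r
    field_simp
    ring
  have hDpos : ∀ θ : ℝ, 0 < Real.cosh (2*ξa) - Real.cos θ := by
    intro θ
    rw [hcoshD θ]
    exact div_pos (np_denom_pos hr hr1 θ) (by linarith)
  -- exceptional set is null
  have hnull : MeasureTheory.volume {η : ℝ | Real.cos (α - η) = 1} = 0 := by
    have hsub : {η : ℝ | Real.cos (α - η) = 1}
        ⊆ Set.range (fun k : ℤ => α - (k:ℝ)*(2*Real.pi)) := by
      intro η hη
      rcases (Real.cos_eq_one_iff _).1 hη with ⟨k, hk⟩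
      exact ⟨k, by dsimp only; linarith⟩
    exact MeasureTheory.measure_mono_null hsub ((Set.countable_range _).measure_zero _)
  have hae_ne : ∀ᵐ η : ℝ, Real.cos (α - η) ≠ 1 := by
    rw [MeasureTheory.ae_iff]
    simpa using hnull
  have hE : (0:ℝ) < Real.exp (2*n*ξa) := Real.exp_pos _
  -- generic machinery for both integrals
  have key : ∀ f : ℝ → ℝ, Continuous f →
      (∫ η in (0:ℝ)..(2*Real.pi),
          ellipseNPKernel l ξa α η * ((ellipseGamma l ξa η)⁻¹ * f η) * ellipseGamma l ξa η)
        = (Real.sinh (2*ξa) / (4*Real.pi*ellipseGamma l ξa α)) * (2*r) *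
          ∫ η in (0:ℝ)..(2*Real.pi), f η / (1 - 2*r*Real.cos (α+η) + r^2) := by
    intro f hf
    have h1 : (∫ η in (0:ℝ)..(2*Real.pi),
          ellipseNPKernel l ξa α η * ((ellipseGamma l ξa η)⁻¹ * f η) * ellipseGamma l ξa η)
        = ∫ η in (0:ℝ)..(2*Real.pi),
            (Real.sinh (2*ξa) / (4*Real.pi*ellipseGamma l ξa α)) * (2*r) *
              (f η / (1 - 2*r*Real.cos (α+η) + r^2)) := by
      apply intervalIntegral.integral_congr_ae
      filter_upwards [hae_ne] with η hη _
      rw [np_kernel_eq l ξa hl hξa α η hη]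
      have hγη : (ellipseGamma l ξa η) ≠ 0 := (np_gamma_pos l ξa hl hξa η).ne'
      have hD1 : Real.cosh (2*ξa) - Real.cos (α+η) ≠ 0 := (hDpos (α+η)).ne'
      have hD2 : (1 - 2*r*Real.cos (α+η) + r^2) ≠ 0 := (np_denom_pos hr hr1 (α+η)).ne'
      rw [hcoshD (α+η)]
      field_simp
    rw [h1, intervalIntegral.integral_const_mul]
  have harith : Real.sinh (2*ξa) / (4*Real.pi*ellipseGamma l ξa α) * (2*r) *
      (2*Real.pi*r^n/(1-r^2)) = (1 / (2 * Real.exp (2*n*ξa))) * (ellipseGamma l ξa α)⁻¹ := by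
    rw [hsinh]
    field_simp
    linear_combination 4 * hrn
  constructor
  · rw [key (fun η => Real.cos (n*η))
      (Real.continuous_cos.comp (continuous_const.mul continuous_id))]
    rw [np_shift_cos hr hr1 n α, ← mul_assoc, harith]
    ring
  · rw [key (fun η => Real.sin (n*η))
      (Real.continuous_sin.comp (continuous_const.mul continuous_id))]
    rw [np_shift_sin hr hr1 n α]
    rw [show (Real.sinh (2*ξa) / (4*Real.pi*ellipseGamma l ξa α) * (2*r)) *
        -((2*Real.pi*r^n/(1-r^2)) * Real.sin (n*α))
      = -(Real.sinh (2*ξa) / (4*Real.pi*ellipseGamma l ξa α) * (2*r) *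
          (2*Real.pi*r^n/(1-r^2))) * Real.sin (n*α) by ring, harith]
    ring
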